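/- The set X = {(x,y) ∈ ℝ² : x = r·cos(2π/r), y = r·sin(2π/r) for some r ∈ (0,1]} ∪ {(0,0)} (the image of the spiral f(r) = r·e^{2πi/r} together with the origin) is not LNE at 0: there is no neighborhood U of 0 and constant C with d_{X∩U}(p,q) ≤ C‖p−q‖ for all p,q ∈ X∩U. -/

import Mathlib

open Set Metric Filter Topology Pointwise

noncomputable def innerDist {E : Type*} [NormedAddCommGroup E] (Z : Set E) (x y : E) : ENNReal :=
  ⨅ (γ : ℝ → E) (_ : ContinuousOn γ (Set.Icc 0 1)) (_ : Set.MapsTo γ (Set.Icc 0 1) Z)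
    (_ : γ 0 = x) (_ : γ 1 = y), eVariationOn γ (Set.Icc 0 1)

def IsLNE {E : Type*} [NormedAddCommGroup E] (Z : Set E) (C : ℝ) : Prop :=
  ∀ x ∈ Z, ∀ y ∈ Z, innerDist Z x y ≤ ENNReal.ofReal (C * ‖x - y‖)

/-- The spiral `r ↦ r·e^{2πi/r}`, `r ∈ (0,1]`, together with the origin. -/
noncomputable def spiralSet : Set ℂ :=
  {c : ℂ | ∃ r : ℝ, r ∈ Set.Ioc (0:ℝ) 1 ∧
    c = (r : ℂ) * Complex.exp (2 * Real.pi * Complex.I / (r : ℂ))} ∪ {0}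

lemma spiral_abs {r : ℝ} (hr : 0 < r) :
    ‖(r:ℂ) * Complex.exp (2 * Real.pi * Complex.I / (r:ℂ))‖ = r := by
  have h : (2 * (Real.pi:ℂ) * Complex.I / (r:ℂ)) = ((2*Real.pi/r : ℝ):ℂ) * Complex.I := by
    push_cast; ring
  rw [norm_mul, h, Complex.norm_exp]
  simp [abs_of_pos hr]

theorem stmt_6 : ¬ ∃ U ∈ 𝓝 (0 : ℂ), ∃ C : ℝ, IsLNE (spiralSet ∩ U) C := by
  rintro ⟨U, hU, C, hC⟩
  obtain ⟨ε, hε, hball⟩ := Metric.mem_nhds_iff.mp hU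
  set n : ℕ := ⌈max C ε⁻¹⌉₊ + 1 with hn
  set N : ℝ := (n : ℝ) with hNdef
  have hN1 : (1:ℝ) ≤ N := by
    have : 1 ≤ n := Nat.le_add_left 1 _
    rw [hNdef]
    exact_mod_cast this
  have hN0 : (0:ℝ) < N := lt_of_lt_of_le one_pos hN1
  have hmax : max C ε⁻¹ < N := by
    calc max C ε⁻¹ ≤ (⌈max C ε⁻¹⌉₊ : ℝ) := Nat.le_ceil _
    _ < N := by rw [hNdef, hn]; exact_mod_cast Nat.lt_succ_self _
  have hCN : C < N := lt_of_le_of_lt (le_max_left _ _) hmax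
  have hεN : ε⁻¹ < N := lt_of_le_of_lt (le_max_right _ _) hmax
  set a : ℝ := N⁻¹ with hadef
  set b : ℝ := (N+1)⁻¹ with hbdef
  set m : ℝ := 2/(2*N+1) with hmdef
  have ha0 : 0 < a := by positivity
  have hb0 : 0 < b := by positivity
  have hm0 : 0 < m := by positivity
  have ha1 : a ≤ 1 := by rw [hadef]; rw [inv_le_one_iff₀]; right; exact hN1
  have hb1 : b ≤ 1 := by rw [hbdef]; rw [inv_le_one_iff₀]; right; linarith
  have hm1 : m ≤ 1 := by rw [hmdef, div_le_one (by linarith)]; linarith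
  have hba : b < a := by
    rw [hadef, hbdef]
    exact inv_strictAnti₀ hN0 (by linarith)
  have hbm : b ≤ m := by
    rw [hbdef, hmdef, inv_eq_one_div, div_le_div_iff₀ (by linarith) (by linarith)]
    nlinarith
  have hma : m ≤ a := by
    rw [hadef, hmdef, inv_eq_one_div, div_le_div_iff₀ (by linarith) hN0]
    nlinarith
  have haε : a < ε := by
    rw [hadef]
    calc N⁻¹ < (ε⁻¹)⁻¹ := inv_strictAnti₀ (by positivity) hεN
    _ = ε := inv_inv ε
  -- exponential values
  have ea : Complex.exp (2 * Real.pi * Complex.I / ((a:ℝ):ℂ)) = 1 := by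
    have h : (2 * (Real.pi:ℂ) * Complex.I / ((a:ℝ):ℂ)) = (n:ℤ) * (2 * Real.pi * Complex.I) := by
      rw [hadef, hNdef]
      push_cast
      rw [div_eq_mul_inv, inv_inv]
      ring
    rw [h, Complex.exp_int_mul_two_pi_mul_I]
  have eb : Complex.exp (2 * Real.pi * Complex.I / ((b:ℝ):ℂ)) = 1 := by
    have h : (2 * (Real.pi:ℂ) * Complex.I / ((b:ℝ):ℂ)) = ((n:ℤ)+1) * (2 * Real.pi * Complex.I) := by
      rw [hbdef, hNdef]
      push_cast
      rw [div_eq_mul_inv, inv_inv]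
      ring
    rw [h]
    have := Complex.exp_int_mul_two_pi_mul_I ((n:ℤ)+1)
    exact_mod_cast this
  have em : Complex.exp (2 * Real.pi * Complex.I / ((m:ℝ):ℂ)) = -1 := by
    have hm0' : ((m:ℝ):ℂ) ≠ 0 := by
      exact_mod_cast ne_of_gt hm0
    have h : (2 * (Real.pi:ℂ) * Complex.I / ((m:ℝ):ℂ)) =
        (n:ℤ) * (2 * Real.pi * Complex.I) + Real.pi * Complex.I := by
      rw [hmdef, hNdef]
      have h2 : ((2:ℝ)*(n:ℝ)+1 : ℝ) ≠ 0 := by positivity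
      push_cast
      field_simp
    rw [h, Complex.exp_add, Complex.exp_int_mul_two_pi_mul_I, Complex.exp_pi_mul_I, one_mul]
  -- the three points
  set p : ℂ := (a:ℂ) with hpdef
  set q : ℂ := (b:ℂ) with hqdef
  have hpS : p ∈ spiralSet := by
    left; exact ⟨a, ⟨ha0, ha1⟩, by rw [ea, mul_one]⟩
  have hqS : q ∈ spiralSet := by
    left; exact ⟨b, ⟨hb0, hb1⟩, by rw [eb, mul_one]⟩
  have hpU : p ∈ U := by
    apply hball
    simp only [mem_ball, dist_zero_right, hpdef, Complex.norm_real, Real.norm_eq_abs,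
      abs_of_pos ha0]
    exact haε
  have hqU : q ∈ U := by
    apply hball
    simp only [mem_ball, dist_zero_right, hqdef, Complex.norm_real, Real.norm_eq_abs,
      abs_of_pos hb0]
    linarith
  have hle := hC p ⟨hpS, hpU⟩ q ⟨hqS, hqU⟩
  -- lower bound on the inner distance
  have hlow : ENNReal.ofReal (a + b) ≤ innerDist (spiralSet ∩ U) p q := by
    rw [innerDist]
    refine le_iInf fun γ => le_iInf fun hγc => le_iInf fun hγm => le_iInf fun h0 =>
      le_iInf fun h1 => ?_
    have habs : ContinuousOn (fun t => ‖γ t‖) (Icc 0 1) :=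
      continuous_norm.comp_continuousOn hγc
    have hmem : m ∈ Icc (‖γ 1‖) (‖γ 0‖) := by
      rw [h0, h1, hpdef, hqdef, Complex.norm_real, Complex.norm_real,
        Real.norm_eq_abs, Real.norm_eq_abs,
        abs_of_pos ha0, abs_of_pos hb0]
      exact ⟨hbm, hma⟩
    obtain ⟨t, ht, htm0⟩ := intermediate_value_Icc' zero_le_one habs hmem
    have htm : ‖γ t‖ = m := htm0
    have hγt : γ t ∈ spiralSet ∩ U := hγm ht
    have hw : γ t = -(m:ℂ) := by
      rcases hγt.1 with ⟨r, hr, hrc⟩ | h0'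
      · have hrm : r = m := by
          have h1' := spiral_abs hr.1
          rw [← hrc, htm] at h1'
          exact h1'.symm
        rw [hrc, hrm, em]
        ring
      · exfalso
        rw [mem_singleton_iff] at h0'
        rw [h0'] at htm
        simp at htm
        exact absurd htm.symm (ne_of_gt hm0)
    -- distance lower bounds
    have ed1 : ENNReal.ofReal a ≤ edist (γ 0) (γ t) := by
      rw [h0, hw, edist_dist, Complex.dist_eq, hpdef]
      have : (a:ℂ) - -(m:ℂ) = ((a+m : ℝ):ℂ) := by push_cast; ring
      rw [this, Complex.norm_real, Real.norm_eq_abs, abs_of_pos (by linarith)]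
      exact ENNReal.ofReal_le_ofReal (by linarith)
    have ed2 : ENNReal.ofReal b ≤ edist (γ t) (γ 1) := by
      rw [h1, hw, edist_dist, Complex.dist_eq, hqdef]
      have : -(m:ℂ) - (b:ℂ) = ((-(m+b) : ℝ):ℂ) := by push_cast; ring
      rw [this, Complex.norm_real, Real.norm_eq_abs, abs_of_neg (by linarith), neg_neg]
      exact ENNReal.ofReal_le_ofReal (by linarith)
    have hsplit := eVariationOn.Icc_add_Icc γ (s := Icc (0:ℝ) 1) ht.1 ht.2 ht
    calc ENNReal.ofReal (a + b) = ENNReal.ofReal a + ENNReal.ofReal b :=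
          ENNReal.ofReal_add ha0.le hb0.le
      _ ≤ edist (γ 0) (γ t) + edist (γ t) (γ 1) := add_le_add ed1 ed2
      _ ≤ eVariationOn γ (Icc 0 1 ∩ Icc 0 t) + eVariationOn γ (Icc 0 1 ∩ Icc t 1) := by
          apply add_le_add
          · exact eVariationOn.edist_le γ ⟨⟨le_rfl, zero_le_one⟩, le_rfl, ht.1⟩ ⟨ht, ht.1, le_rfl⟩
          · exact eVariationOn.edist_le γ ⟨ht, le_rfl, ht.2⟩ ⟨⟨zero_le_one, le_rfl⟩, ht.2, le_rfl⟩
      _ = eVariationOn γ (Icc 0 1 ∩ Icc 0 1) := hsplit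
      _ = eVariationOn γ (Icc 0 1) := by rw [inter_self]
  -- combine
  have hnorm : ‖p - q‖ = a - b := by
    rw [hpdef, hqdef]
    have : (a:ℂ) - (b:ℂ) = ((a - b : ℝ):ℂ) := by push_cast; ring
    rw [this, Complex.norm_real, Real.norm_eq_abs, abs_of_pos (by linarith)]
  have hcomb := hlow.trans hle
  rw [hnorm] at hcomb
  have hreal : a + b ≤ C * (a - b) := by
    rcases ENNReal.ofReal_le_ofReal_iff'.mp hcomb with h | h
    · exact h
    · linarith
  -- numeric contradiction
  rw [hadef, hbdef] at hreal
  have h1 : N⁻¹ - (N+1)⁻¹ = (N*(N+1))⁻¹ := by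
    field_simp
    ring
  have h2 : N⁻¹ + (N+1)⁻¹ = (2*N+1) * (N*(N+1))⁻¹ := by
    field_simp
    ring
  rw [h1, h2] at hreal
  have h3 : (0:ℝ) < (N*(N+1))⁻¹ := by positivity
  nlinarith
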